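/- Let k, k' ≥ 1 and s ∈ Σ* with |s| ≥ k + k'. Then cap(S^gap_{k,k'}(s)) = 0 if and only if s is periodic with period gcd(k, k') (i.e., s_i = s_{i + gcd(k,k')} for all valid indices i). -/

import Mathlib

open Filter

noncomputable def cap {A : Type*} (S : Set (List A)) : ℝ :=
  Filter.limsup
    (fun n : ℕ => Real.logb 2 (({x ∈ S | x.length = n} : Set (List A)).ncard) / n)
    Filter.atTop

def Sys {A : Type*} (step : List A → List A → Prop) (s : List A) : Set (List A) :=
  {y | Relation.ReflTransGen step s y}

def GapStep {A : Type*} (k k' : ℕ) (x y : List A) : Prop :=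
  ∃ u v w z : List A, v.length = k ∧ w.length = k' ∧
    x = u ++ v ++ w ++ z ∧ y = u ++ v ++ w ++ v ++ z

namespace Stmt18Aux

variable {A : Type*}

/-- the result of a gap duplication step at position `p`. -/
def insWord (k k' p : ℕ) (x : List A) : List A :=
  x.take (p+k+k') ++ ((x.drop p).take k ++ x.drop (p+k+k'))

lemma gapstep_insWord (k k' p : ℕ) (x : List A) (h : p + k + k' ≤ x.length) :
    GapStep k k' x (insWord k k' p x) := by
  have h1 : x.take p ++ (x.drop p).take k = x.take (p+k) := (List.take_add (l := x) (i := p) (j := k)).symm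
  have h2 : x.take (p+k) ++ (x.drop (p+k)).take k' = x.take (p+k+k') :=
    (List.take_add (l := x) (i := p+k) (j := k')).symm
  refine ⟨x.take p, (x.drop p).take k, (x.drop (p+k)).take k', x.drop (p+k+k'), ?_, ?_, ?_, ?_⟩
  · simp; omega
  · simp; omega
  · conv_lhs => rw [← List.take_append_drop (p+k+k') x, ← h2, ← h1]
  · unfold insWord
    rw [← h2, ← h1]
    simp [List.append_assoc]

lemma sys_tail {st : List A → List A → Prop} {s y z : List A}
    (hy : y ∈ Sys st s) (h : st y z) : z ∈ Sys st s :=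
  Relation.ReflTransGen.tail hy h


section FW

variable (k k' g : ℕ) (y : List A) (j : ℕ)

/-- words generated by choosing, at each step, a duplication at position `j` (true)
or at position `j+g` (false); only the part after `y.take (j+k+k')` is recorded. -/
def fw : List Bool → List A
  | [] => (y.drop j).take k ++ y.drop (j+k+k')
  | true :: e => (y.drop j).take k ++ fw e
  | false :: e => (fw e).take g ++ ((y.drop (j+g)).take k ++ (fw e).drop g)

variable {k k' g y j}
variable (hk : 1 ≤ k) (hg : 1 ≤ g) (hgk : g ≤ k) (hgk' : g ≤ k')
  (hj : j + k + k' ≤ y.length)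

include hk hg hgk hgk' hj

lemma fw_length (e : List Bool) :
    (fw k k' g y j e).length = k + e.length * k + (y.length - (j+k+k')) := by
  induction e with
  | nil => simp [fw]; omega
  | cons b e ih =>
    have hfe : k ≤ (fw k k' g y j e).length := by
      rw [ih]; exact le_trans (Nat.le_add_right _ _) (Nat.le_add_right _ _)
    have hmul : (b :: e).length * k = e.length * k + k := by
      simp [List.length_cons]; ring
    cases b <;>
      simp only [fw, List.length_append, List.length_take, List.length_drop, ih, hmul] <;>
      · generalize e.length * k = X at *
        omega

lemma fw_le (e : List Bool) : k ≤ (fw k k' g y j e).length := by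
  rw [fw_length hk hg hgk hgk' hj]
  exact le_trans (Nat.le_add_right _ _) (Nat.le_add_right _ _)

lemma fw_getElem_zero (e : List Bool) : (fw k k' g y j e)[0]? = y[j]? := by
  have hv1 : ((y.drop j).take k)[0]? = y[j]? := by
    rw [List.getElem?_take, if_pos (show 0 < k by omega), List.getElem?_drop, Nat.add_zero]
  induction e with
  | nil =>
    rw [fw, List.getElem?_append_left (by simp; omega), hv1]
  | cons b e ih =>
    cases b
    · have hlen : k ≤ (fw k k' g y j e).length := fw_le hk hg hgk hgk' hj e
      rw [fw, List.getElem?_append_left (by simp; omega), List.getElem?_take,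
        if_pos (show 0 < g by omega), ih]
    · rw [fw, List.getElem?_append_left (by simp; omega), hv1]

lemma fw_reach (s : List A) (hy : y ∈ Sys (GapStep k k') s) (e : List Bool) :
    (y.take (j+k+k') ++ fw k k' g y j e) ∈ Sys (GapStep k k') s := by
  set P := y.take (j+k+k') with hP
  have hPlen : P.length = j+k+k' := by rw [hP, List.length_take]; omega
  induction e with
  | nil =>
    refine sys_tail hy ?_
    have h1 := gapstep_insWord k k' j y hj
    have h2 : insWord k k' j y = P ++ fw k k' g y j [] := rfl
    rwa [h2] at h1
  | cons b e ih =>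
    have hfe : k ≤ (fw k k' g y j e).length := fw_le hk hg hgk hgk' hj e
    cases b
    · -- false : step at position j+g
      refine sys_tail ih ?_
      have hle : (j+g) + k + k' ≤ (P ++ fw k k' g y j e).length := by
        rw [List.length_append, hPlen]; omega
      have hstep := gapstep_insWord k k' (j+g) (P ++ fw k k' g y j e) hle
      have i1 : (P ++ fw k k' g y j e).take ((j+g)+k+k') = P ++ (fw k k' g y j e).take g := by
        rw [List.take_append, List.take_of_length_le (by omega)]
        congr 2
        omega
      have i2 : (P ++ fw k k' g y j e).drop ((j+g)+k+k') = (fw k k' g y j e).drop g := by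
        rw [List.drop_append, List.drop_of_length_le (by omega),
          List.nil_append]
        congr 1
        omega
      have i3 : ((P ++ fw k k' g y j e).drop (j+g)).take k = (y.drop (j+g)).take k := by
        rw [List.drop_append]
        have e1 : j + g - P.length = 0 := by omega
        rw [e1, List.drop_zero, List.take_append]
        have hPd : (P.drop (j+g)).length = k + k' - g := by
          rw [List.length_drop, hPlen]; omega
        rw [hPd]
        have e2 : k - (k + k' - g) = 0 := by omega
        rw [e2, List.take_zero, List.append_nil, hP, List.drop_take]
        have e3 : j + k + k' - (j + g) = k + k' - g := by omega
        rw [e3, List.take_take]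
        congr 1
        omega
      have key : insWord k k' (j+g) (P ++ fw k k' g y j e) = P ++ fw k k' g y j (false :: e) := by
        unfold insWord
        rw [i1, i2, i3, fw]
        simp [List.append_assoc]
      rwa [key] at hstep
    · -- true : step at position j
      refine sys_tail ih ?_
      have hle : j + k + k' ≤ (P ++ fw k k' g y j e).length := by
        rw [List.length_append, hPlen]; omega
      have hstep := gapstep_insWord k k' j (P ++ fw k k' g y j e) hle
      have i1 : (P ++ fw k k' g y j e).take (j+k+k') = P := List.take_left' hPlen
      have i2 : (P ++ fw k k' g y j e).drop (j+k+k') = fw k k' g y j e := List.drop_left' hPlen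
      have i3 : ((P ++ fw k k' g y j e).drop j).take k = (y.drop j).take k := by
        rw [List.drop_append]
        have e1 : j - P.length = 0 := by omega
        rw [e1, List.drop_zero, List.take_append]
        have hPd : (P.drop j).length = k + k' := by
          rw [List.length_drop, hPlen]; omega
        rw [hPd]
        have e2 : k - (k + k') = 0 := by omega
        rw [e2, List.take_zero, List.append_nil, hP, List.drop_take]
        have e3 : j + k + k' - j = k + k' := by omega
        rw [e3, List.take_take]
        congr 1
        omega
      have key : insWord k k' j (P ++ fw k k' g y j e) = P ++ fw k k' g y j (true :: e) := by
        unfold insWord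
        rw [i1, i2, i3, fw]
      rwa [key] at hstep

lemma fw_inj (hdef : y[j]? ≠ y[j+k]?) :
    ∀ e1 e2 : List Bool, e1.length = e2.length →
      fw k k' g y j e1 = fw k k' g y j e2 → e1 = e2 := by
  have hv2 : ∀ (e : List Bool) (X : List A),
      ((fw k k' g y j e).take g ++ ((y.drop (j+g)).take k ++ X))[k]? = y[j+k]? := by
    intro e X
    have hfe : k ≤ (fw k k' g y j e).length := fw_le hk hg hgk hgk' hj e
    have hlen : ((fw k k' g y j e).take g).length = g := by simp; omega
    rw [List.getElem?_append_right (by simp; omega), hlen,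
      List.getElem?_append_left (by simp; omega),
      List.getElem?_take, if_pos (show k - g < k by omega), List.getElem?_drop]
    congr 1
    omega
  have hL : ∀ X : List A, ((y.drop j).take k ++ X)[k]? = X[0]? := by
    intro X
    have hlen : ((y.drop j).take k).length = k := by simp; omega
    rw [List.getElem?_append_right (le_of_eq hlen), hlen, Nat.sub_self]
  intro e1
  induction e1 with
  | nil =>
    intro e2 hl _
    cases e2 with
    | nil => rfl
    | cons b e2' => simp at hl
  | cons b1 e1' ih =>
    intro e2 hl heq
    cases e2 with
    | nil => simp at hl
    | cons b2 e2' =>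
      have hl' : e1'.length = e2'.length := by simpa using hl
      cases b1 <;> cases b2
      · -- false false
        rw [fw, fw] at heq
        have hfe1 : k ≤ (fw k k' g y j e1').length := fw_le hk hg hgk hgk' hj e1'
        have hfe2 : k ≤ (fw k k' g y j e2').length := fw_le hk hg hgk hgk' hj e2'
        have hl1 : ((fw k k' g y j e1').take g).length = ((fw k k' g y j e2').take g).length := by
          simp; omega
        obtain ⟨ht, hrest⟩ := List.append_inj heq hl1
        have hdrop := List.append_cancel_left hrest
        have hfw : fw k k' g y j e1' = fw k k' g y j e2' := by
          rw [← List.take_append_drop g (fw k k' g y j e1'), ht, hdrop,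
            List.take_append_drop]
        rw [ih e2' hl' hfw]
      · -- false true : contradiction
        exfalso
        apply hdef
        have h1 := congrArg (fun l : List A => l[k]?) heq
        rw [fw, fw, hv2, hL, fw_getElem_zero hk hg hgk hgk' hj] at h1
        exact h1.symm
      · -- true false : contradiction
        exfalso
        apply hdef
        have h1 := congrArg (fun l : List A => l[k]?) heq
        rw [fw, fw, hv2, hL, fw_getElem_zero hk hg hgk hgk' hj] at h1
        exact h1
      · -- true true
        rw [fw, fw] at heq
        have := List.append_cancel_left heq
        rw [ih e2' hl' this]

end FW

lemma sys_len_finite [Finite A] (st : List A → List A → Prop) (s : List A) (n : ℕ) :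
    ({x ∈ Sys st s | x.length = n}).Finite :=
  (List.finite_length_eq A n).subset (fun _ hx => hx.2)

lemma count_ge [Finite A] {k k' g : ℕ} {s y : List A} {j : ℕ}
    (hk : 1 ≤ k) (hg : 1 ≤ g) (hgk : g ≤ k) (hgk' : g ≤ k')
    (hj : j + k + k' ≤ y.length) (hy : y ∈ Sys (GapStep k k') s)
    (hdef : y[j]? ≠ y[j+k]?) (m : ℕ) :
    2^m ≤ ({x ∈ Sys (GapStep k k') s | x.length = y.length + (m+1)*k}).ncard := by
  set F : (Fin m → Bool) → List A :=
    fun b => y.take (j+k+k') ++ fw k k' g y j (List.ofFn b) with hF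
  have hinj : Function.Injective F := by
    intro b1 b2 h
    rw [hF] at h
    simp only at h
    have h2 := List.append_cancel_left h
    have h3 := fw_inj hk hg hgk hgk' hj hdef _ _ (by simp) h2
    exact List.ofFn_injective h3
  have hsub : Set.range F ⊆ {x ∈ Sys (GapStep k k') s | x.length = y.length + (m+1)*k} := by
    rintro x ⟨b, rfl⟩
    refine ⟨fw_reach hk hg hgk hgk' hj s hy _, ?_⟩
    show (y.take (j+k+k') ++ fw k k' g y j (List.ofFn b)).length = _
    rw [List.length_append, List.length_take, fw_length hk hg hgk hgk' hj,
      List.length_ofFn]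
    have hx : (m+1)*k = m*k + k := by ring
    omega
  have hfin := sys_len_finite (GapStep k k') s (y.length + (m+1)*k)
  calc (2:ℕ)^m = (Set.range F).ncard := by
        rw [← Set.image_univ, Set.ncard_image_of_injective _ hinj, Set.ncard_univ]
        simp
    _ ≤ _ := Set.ncard_le_ncard hsub hfin

lemma exists_append {k k' : ℕ} (hk : 1 ≤ k) {s : List A} (hs : k + k' ≤ s.length) (N : ℕ) :
    ∃ y ∈ Sys (GapStep k k') s, s <+: y ∧ y.length = s.length + N*k := by
  induction N with
  | zero => exact ⟨s, Relation.ReflTransGen.refl, List.prefix_refl s, by simp⟩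
  | succ N ih =>
    obtain ⟨y, hy, hpre, hlen⟩ := ih
    have hkk : k + k' ≤ y.length := by omega
    set p := y.length - (k+k') with hp
    have hple : p + k + k' ≤ y.length := by omega
    have hstep := gapstep_insWord k k' p y hple
    refine ⟨insWord k k' p y, sys_tail hy hstep, ?_, ?_⟩
    · have hiw : insWord k k' p y = y ++ ((y.drop p).take k ++ y.drop (p+k+k')) := by
        unfold insWord
        congr 1
        apply List.take_of_length_le
        omega
      rw [hiw]
      exact hpre.trans (List.prefix_append _ _)
    · unfold insWord
      simp only [List.length_append, List.length_take, List.length_drop]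
      have hx : (N+1)*k = N*k + k := by ring
      omega

lemma mod_of_per {s : List A} {p : ℕ} (hp : 1 ≤ p)
    (hper : ∀ t, t + p < s.length → s[t]? = s[t+p]?) :
    ∀ t, t < s.length → s[t]? = s[t % p]? := by
  intro t
  induction t using Nat.strong_induction_on with
  | _ t ih =>
    intro ht
    by_cases hc : t < p
    · rw [Nat.mod_eq_of_lt hc]
    · have h1 := ih (t - p) (by omega) (by omega)
      have h2 := hper (t - p) (by omega)
      have e1 : t - p + p = t := by omega
      rw [e1] at h2
      rw [← h2, h1]
      congr 1
      conv_rhs => rw [← e1]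
      rw [Nat.add_mod_right]

/-- the word obtained by pumping `M` copies of `v0` in front of `D`. -/
def pumpW (v0 D : List A) : ℕ → List A
  | 0 => D
  | M+1 => v0 ++ pumpW v0 D M

lemma pumpW_length (v0 D : List A) (M : ℕ) :
    (pumpW v0 D M).length = M * v0.length + D.length := by
  induction M with
  | zero => simp [pumpW]
  | succ M ih =>
    rw [pumpW, List.length_append, ih]
    have hx : (M+1)*v0.length = M*v0.length + v0.length := by ring
    omega

lemma pumpW_reach {k k' : ℕ} {s : List A} (hs : k + k' ≤ s.length) (M : ℕ) :
    (s.take (k+k') ++ pumpW (s.take k) (s.drop (k+k')) M) ∈ Sys (GapStep k k') s := by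
  have hClen : (s.take (k+k')).length = k + k' := by simp; omega
  induction M with
  | zero =>
    rw [pumpW, List.take_append_drop]
    exact Relation.ReflTransGen.refl
  | succ M ih =>
    refine sys_tail ih ?_
    set x' := s.take (k+k') ++ pumpW (s.take k) (s.drop (k+k')) M with hx'
    have hle : 0 + k + k' ≤ x'.length := by
      rw [hx', List.length_append, hClen]; omega
    have hstep := gapstep_insWord k k' 0 x' hle
    have i1 : x'.take (0+k+k') = s.take (k+k') := by
      rw [show 0+k+k' = k+k' by omega, hx']
      exact List.take_left' hClen
    have i2 : x'.drop (0+k+k') = pumpW (s.take k) (s.drop (k+k')) M := by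
      rw [show 0+k+k' = k+k' by omega, hx']
      exact List.drop_left' hClen
    have i3 : (x'.drop 0).take k = s.take k := by
      rw [List.drop_zero, hx', List.take_append, hClen]
      rw [show k - (k+k') = 0 by omega, List.take_zero, List.append_nil,
        List.take_take]
      congr 1
      omega
    have key : insWord k k' 0 x' = s.take (k+k') ++ pumpW (s.take k) (s.drop (k+k')) (M+1) := by
      unfold insWord
      rw [i1, i2, i3, pumpW]
    rwa [key] at hstep

lemma pumpW_get {k : ℕ} (hk : 1 ≤ k) {v0 : List A} (hv0 : v0.length = k) (D : List A)
    (M t : ℕ) (ht : t < M * k) : (pumpW v0 D M)[t]? = v0[t % k]? := by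
  induction M generalizing t with
  | zero => omega
  | succ M ih =>
    rw [pumpW]
    by_cases hc : t < k
    · rw [List.getElem?_append_left (by omega)]
      congr 1
      rw [Nat.mod_eq_of_lt hc]
    · rw [List.getElem?_append_right (by omega), hv0]
      have hx : (M+1)*k = M*k + k := by ring
      rw [ih (t - k) (by omega)]
      congr 1
      have e1 : t - k + k = t := by omega
      conv_rhs => rw [← e1]
      rw [Nat.add_mod_right]

lemma exists_defect {k k' : ℕ} (hk : 1 ≤ k) (hk' : 1 ≤ k') {s : List A} (hs : k + k' ≤ s.length)
    (hnp : ∃ i, i + Nat.gcd k k' < s.length ∧ s[i]? ≠ s[i + Nat.gcd k k']?) :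
    ∃ y ∈ Sys (GapStep k k') s, ∃ j, j + k + k' ≤ y.length ∧ y[j]? ≠ y[j+k]? := by
  set g := Nat.gcd k k' with hgdef
  obtain ⟨i, hil, hid⟩ := hnp
  by_cases hkd : ∃ t, t + k < s.length ∧ s[t]? ≠ s[t+k]?
  · obtain ⟨t, htl, htd⟩ := hkd
    obtain ⟨y, hy, hpre, hlen⟩ := exists_append hk hs (t + k + k')
    refine ⟨y, hy, t, ?_, ?_⟩
    · have hx : t+k+k' ≤ (t+k+k')*k := Nat.le_mul_of_pos_right _ hk
      omega
    · obtain ⟨r, rfl⟩ := hpre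
      rw [List.getElem?_append_left (by omega), List.getElem?_append_left (by omega)]
      exact htd
  · push_neg at hkd
    have hmod : ∀ t, t < s.length → s[t]? = s[t % k]? := mod_of_per hk hkd
    have hglt : g < k := by
      rcases Nat.lt_or_ge g k with h | h
      · exact h
      · exfalso
        have hgk : g ≤ k := Nat.gcd_le_left _ hk
        have hgeq : g = k := by omega
        apply hid
        rw [hgeq]
        exact hkd i (by omega)
    have hrot : ∃ u, u < k ∧ s[u]? ≠ s[(u + k') % k]? := by
      by_contra hall
      push_neg at hall
      have hiter : ∀ c u, u < k → s[u]? = s[(u + c * k') % k]? := by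
        intro c
        induction c with
        | zero => intro u hu; simp [Nat.mod_eq_of_lt hu]
        | succ c ihc =>
          intro u hu
          have h1 := hall u hu
          have h2 := ihc ((u + k') % k) (Nat.mod_lt _ (by omega))
          rw [h1, h2]
          congr 1
          rw [show u + (c+1)*k' = u + k' + c*k' by ring]
          exact Nat.mod_add_mod _ _ _
      obtain ⟨c, -, hc⟩ := Nat.exists_mul_mod_eq_gcd
        (show Nat.gcd k' k < k by rw [Nat.gcd_comm]; exact hglt)
      have hcg : (c * k') % k = g := by
        rw [Nat.mul_comm c k', hc, Nat.gcd_comm]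
      apply hid
      have e1 : s[i]? = s[i % k]? := hmod i (by omega)
      have e2 : s[i+g]? = s[(i+g) % k]? := hmod (i+g) (by omega)
      have e3 := hiter c (i % k) (Nat.mod_lt _ (by omega))
      rw [e1, e2, e3]
      congr 1
      rw [Nat.mod_add_mod, ← Nat.add_mod_mod, hcg]
    obtain ⟨u, hu, hud⟩ := hrot
    have hv0len : (s.take k).length = k := by simp; omega
    have hClen : (s.take (k+k')).length = k+k' := by simp; omega
    set M := k + k' with hM
    set y := s.take (k+k') ++ pumpW (s.take k) (s.drop (k+k')) M with hy
    have hylen : y.length = (k+k') + (M*k + (s.length - (k+k'))) := by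
      rw [hy, List.length_append, hClen, pumpW_length, hv0len, List.length_drop]
    have hMk : M ≤ M*k := Nat.le_mul_of_pos_right _ hk
    refine ⟨y, pumpW_reach hs M, k' + u, ?_, ?_⟩
    · rw [hylen]; omega
    · have hL : y[k'+u]? = s[(u+k')%k]? := by
        rw [hy, List.getElem?_append_left (by rw [hClen]; omega),
          List.getElem?_take, if_pos (show k'+u < k+k' by omega),
          hmod (k'+u) (by omega)]
        congr 1
        rw [Nat.add_comm k' u]
      have hR : y[k'+u+k]? = s[u]? := by
        rw [hy, List.getElem?_append_right (by rw [hClen]; omega), hClen]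
        have e1 : k'+u+k - (k+k') = u := by omega
        rw [e1, pumpW_get hk hv0len _ M u (by omega), Nat.mod_eq_of_lt hu,
          List.getElem?_take, if_pos hu]
      rw [hL, hR]
      exact Ne.symm hud

lemma ncard_le_card_pow [Fintype A] (S : Set (List A)) (n : ℕ) :
    ({x ∈ S | x.length = n}).ncard ≤ (Fintype.card A)^n := by
  have h1 : ({x ∈ S | x.length = n}) ⊆ {l : List A | l.length = n} := fun x hx => hx.2
  refine le_trans (Set.ncard_le_ncard h1 (List.finite_length_eq A n)) ?_
  have h3 : {l : List A | l.length = n} ⊆ Set.range (fun v : Fin n → A => List.ofFn v) := by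
    intro l hl
    simp only [Set.mem_setOf_eq] at hl
    subst hl
    exact ⟨l.get, List.ofFn_get l⟩
  refine le_trans (Set.ncard_le_ncard h3 (Set.finite_range _)) ?_
  rw [← Set.image_univ]
  refine le_trans (Set.ncard_image_le Set.finite_univ) ?_
  rw [Set.ncard_univ]
  simp [Nat.card_eq_fintype_card]

lemma f_le [Fintype A] (S : Set (List A)) (n : ℕ) :
    Real.logb 2 (({x ∈ S | x.length = n}).ncard) / n
      ≤ max (Real.logb 2 (Fintype.card A)) 0 := by
  set c := ({x ∈ S | x.length = n}).ncard with hc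
  have hcb : c ≤ (Fintype.card A)^n := ncard_le_card_pow S n
  rcases Nat.eq_zero_or_pos c with h0 | h1
  · rw [h0, Nat.cast_zero, Real.logb_zero, zero_div]
    exact le_max_right _ _
  · rcases Nat.eq_zero_or_pos n with hn0 | hn1
    · subst hn0
      rw [Nat.cast_zero, div_zero]
      exact le_max_right _ _
    · have hA1 : 1 ≤ Fintype.card A := by
        by_contra hA
        have h00 : Fintype.card A = 0 := by omega
        rw [h00, Nat.zero_pow (by omega)] at hcb
        omega
      have hApos : (0:ℝ) < (Fintype.card A : ℝ) := by exact_mod_cast hA1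
      have hlog : Real.logb 2 c ≤ n * Real.logb 2 (Fintype.card A) := by
        rw [← Real.logb_pow]
        exact (Real.logb_le_logb (b := 2) (by norm_num) (by exact_mod_cast h1)
          (by positivity)).mpr (by exact_mod_cast hcb)
      have hd : Real.logb 2 c / n ≤ Real.logb 2 (Fintype.card A) := by
        rw [div_le_iff₀ (by exact_mod_cast hn1 : (0:ℝ) < (n:ℝ))]
        rw [mul_comm]
        exact hlog
      exact le_trans hd (le_max_left _ _)

lemma f_bdd [Fintype A] (S : Set (List A)) :
    IsBoundedUnder (· ≤ ·) atTop
      (fun n : ℕ => Real.logb 2 (({x ∈ S | x.length = n}).ncard) / n) :=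
  Filter.isBoundedUnder_of ⟨max (Real.logb 2 (Fintype.card A)) 0, fun n => f_le S n⟩

lemma cap_lower [Fintype A] {k k' : ℕ} (hk : 1 ≤ k) (hk' : 1 ≤ k') {s : List A}
    (hs : k + k' ≤ s.length)
    (hnp : ∃ i, i + Nat.gcd k k' < s.length ∧ s[i]? ≠ s[i + Nat.gcd k k']?) :
    (1:ℝ)/(2*k) ≤ cap (Sys (GapStep k k') s) := by
  obtain ⟨y, hy, j, hj, hdef⟩ := exists_defect hk hk' hs hnp
  have hg1 : 1 ≤ Nat.gcd k k' := Nat.gcd_pos_of_pos_left _ hk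
  have hgk : Nat.gcd k k' ≤ k := Nat.gcd_le_left _ hk
  have hgk' : Nat.gcd k k' ≤ k' := Nat.gcd_le_right _ hk'
  unfold cap
  refine le_limsup_of_frequently_le ?_ (f_bdd _)
  rw [Filter.frequently_atTop]
  intro N
  set m := N + y.length + k with hm
  have hx : m+1 ≤ (m+1)*k := Nat.le_mul_of_pos_right _ hk
  refine ⟨y.length + (m+1)*k, by omega, ?_⟩
  have hcount := count_ge hk hg1 hgk hgk' hj hy hdef m
  set n := y.length + (m+1)*k with hn
  set c := ({x ∈ Sys (GapStep k k') s | x.length = n}).ncard with hc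
  have hc2 : (2:ℝ)^m ≤ (c:ℝ) := by exact_mod_cast hcount
  have hcpos : (0:ℝ) < (c:ℝ) := lt_of_lt_of_le (by positivity) hc2
  have hm2 : (m:ℝ) ≤ Real.logb 2 c := by
    have h2 := (Real.logb_le_logb (b := 2) (by norm_num) (by positivity) hcpos).mpr hc2
    rwa [Real.logb_pow, Real.logb_self_eq_one (by norm_num), mul_one] at h2
  have hn1 : 1 ≤ n := by omega
  have hnpos : (0:ℝ) < (n:ℝ) := by exact_mod_cast hn1
  have hkR : (0:ℝ) < (k:ℝ) := by exact_mod_cast hk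
  have hnat : n ≤ m * (2*k) := by
    have hx1 : (m+1)*k = m*k+k := by ring
    have hx2 : m*(2*k) = m*k + m*k := by ring
    have hx4 : m ≤ m*k := Nat.le_mul_of_pos_right _ hk
    omega
  have hfrac : (1:ℝ)/(2*k) ≤ (m:ℝ) / n := by
    rw [div_le_div_iff₀ (by linarith) hnpos, one_mul]
    calc (n:ℝ) = ((n:ℕ):ℝ) := rfl
      _ ≤ ((m * (2*k) : ℕ):ℝ) := by exact_mod_cast hnat
      _ = (m:ℝ) * (2*(k:ℝ)) := by push_cast; ring
  refine le_trans hfrac ?_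
  rw [div_le_div_iff₀ hnpos hnpos]
  exact mul_le_mul_of_nonneg_right hm2 hnpos.le

lemma step_pat {k k' g : ℕ} (hdk : g ∣ k) (hdk' : g ∣ k') {s x y' : List A}
    (hx : ∀ t, t < x.length → x[t]? = s[t % g]?) (hst : GapStep k k' x y') :
    ∀ t, t < y'.length → y'[t]? = s[t % g]? := by
  obtain ⟨u, v, w, z, hv, hw, hxe, hye⟩ := hst
  obtain ⟨d1, hd1⟩ := hdk
  obtain ⟨d2, hd2⟩ := hdk'
  set a := u.length with ha
  have hl : ((u++v)++w).length = a+k+k' := by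
    simp only [List.length_append, hv, hw, ← ha]
  have hxlen : x.length = a+k+k'+z.length := by
    rw [hxe]; simp only [List.length_append, hv, hw, ← ha]
  have hylen : y'.length = a+k+k'+k+z.length := by
    rw [hye]; simp only [List.length_append, hv, hw, ← ha]
  intro t ht
  by_cases h1 : t < a+k+k'
  · have htake : y'.take (a+k+k') = x.take (a+k+k') := by
      rw [hxe, hye]
      rw [show u++v++w++v++z = ((u++v)++w) ++ (v++z) by simp [List.append_assoc]]
      rw [show u++v++w++z = ((u++v)++w) ++ z by simp [List.append_assoc]]
      rw [List.take_left' hl, List.take_left' hl]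
    have e1 : y'[t]? = (y'.take (a+k+k'))[t]? := by rw [List.getElem?_take, if_pos h1]
    have e2 : x[t]? = (x.take (a+k+k'))[t]? := by rw [List.getElem?_take, if_pos h1]
    rw [e1, htake, ← e2]
    exact hx t (by omega)
  · have hdropy : y'.drop (a+k+k') = v ++ z := by
      rw [hye, show u++v++w++v++z = ((u++v)++w) ++ (v++z) by simp [List.append_assoc]]
      exact List.drop_left' hl
    have hdropx : x.drop (a+k+k') = z := by
      rw [hxe, show u++v++w++z = ((u++v)++w) ++ z by simp [List.append_assoc]]
      exact List.drop_left' hl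
    have hgety : y'[t]? = (v++z)[t - (a+k+k')]? := by
      rw [← hdropy, List.getElem?_drop]
      congr 1
      omega
    by_cases h2 : t < a+k+k'+k
    · rw [hgety, List.getElem?_append_left (by rw [hv]; omega)]
      have hgetx : x[a + (t - (a+k+k'))]? = v[t - (a+k+k')]? := by
        rw [hxe, show u++v++w++z = u ++ (v ++ (w ++ z)) by simp [List.append_assoc]]
        rw [List.getElem?_append_right (by omega)]
        rw [show a + (t - (a+k+k')) - a = t - (a+k+k') by omega]
        rw [List.getElem?_append_left (by rw [hv]; omega)]
      rw [← hgetx, hx _ (by omega)]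
      congr 1
      have e3 : t = (a + (t - (a+k+k'))) + g * (d1 + d2) := by
        have e4 : k + k' = g*(d1+d2) := by rw [hd1, hd2]; ring
        omega
      conv_rhs => rw [e3]
      rw [Nat.add_mul_mod_self_left]
    · rw [hgety, List.getElem?_append_right (by rw [hv]; omega), hv]
      have hgetx : x[(a+k+k') + (t - (a+k+k') - k)]? = z[t - (a+k+k') - k]? := by
        rw [← hdropx, List.getElem?_drop]
      rw [← hgetx, hx _ (by omega)]
      congr 1
      have e3 : t = ((a+k+k') + (t - (a+k+k') - k)) + g * d1 := by omega
      conv_rhs => rw [e3]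
      rw [Nat.add_mul_mod_self_left]

lemma cap_zero [Fintype A] {k k' : ℕ} (hk : 1 ≤ k) (hk' : 1 ≤ k') {s : List A}
    (hs : k + k' ≤ s.length)
    (hper : ∀ i, i + Nat.gcd k k' < s.length → s[i]? = s[i + Nat.gcd k k']?) :
    cap (Sys (GapStep k k') s) = 0 := by
  set g := Nat.gcd k k' with hgdef
  have hg1 : 1 ≤ g := Nat.gcd_pos_of_pos_left _ hk
  have hpat0 : ∀ t, t < s.length → s[t]? = s[t % g]? := mod_of_per hg1 hper
  have hinv : ∀ x, x ∈ Sys (GapStep k k') s → ∀ t, t < x.length → x[t]? = s[t % g]? := by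
    intro x hx
    have hx' : Relation.ReflTransGen (GapStep k k') s x := hx
    induction hx' with
    | refl => exact hpat0
    | tail hab hbc ih =>
      exact step_pat (Nat.gcd_dvd_left k k') (Nat.gcd_dvd_right k k') (ih hab) hbc
  have hsub : ∀ n : ℕ, ({x ∈ Sys (GapStep k k') s | x.length = n}).ncard ≤ 1 := by
    intro n
    have hss : ({x ∈ Sys (GapStep k k') s | x.length = n}).Subsingleton := by
      intro x1 h1 x2 h2
      have e1 : x1.length = n := h1.2
      have e2 : x2.length = n := h2.2
      apply List.ext_getElem?
      intro idx
      by_cases hidx : idx < n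
      · rw [hinv x1 h1.1 idx (by omega), hinv x2 h2.1 idx (by omega)]
      · rw [List.getElem?_eq_none (by omega), List.getElem?_eq_none (by omega)]
    rcases hss.eq_empty_or_singleton with h | ⟨a, h⟩
    · rw [h]; simp
    · rw [h, Set.ncard_singleton]
  unfold cap
  have hfun : (fun n : ℕ =>
      Real.logb 2 (({x ∈ Sys (GapStep k k') s | x.length = n}).ncard) / n)
      = fun _ => (0:ℝ) := by
    funext n
    have hn := hsub n
    rcases Nat.le_one_iff_eq_zero_or_eq_one.mp hn with h | h <;>
      rw [h] <;> simp
  rw [hfun]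
  exact limsup_const 0

end Stmt18Aux

open Stmt18Aux in
theorem stmt18 {A : Type*} [Fintype A] [DecidableEq A] (k k' : ℕ)
    (hk : 1 ≤ k) (hk' : 1 ≤ k') (s : List A) (hs : k + k' ≤ s.length) :
    cap (Sys (GapStep k k') s) = 0 ↔
      ∀ i : ℕ, i + Nat.gcd k k' < s.length → s[i]? = s[i + Nat.gcd k k']? := by
  constructor
  · intro hcap
    by_contra hne
    push_neg at hne
    have h := cap_lower hk hk' hs hne
    rw [hcap] at h
    have hkR : (0:ℝ) < (k:ℝ) := by exact_mod_cast hk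
    have h2 : (0:ℝ) < 1/(2*(k:ℝ)) := by
      apply one_div_pos.mpr
      linarith
    linarith
  · intro hper
    exact cap_zero hk hk' hs hper
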